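/- If every entry of a nonnegative circulation w on a finite directed graph is an integer, then w is a finite sum of characteristic vectors of directed cycles (with positive integer multiplicities). -/

import Mathlib

open Finset

/-- An integer circulation on a finite directed graph: at each vertex, inflow
equals outflow. -/
def conservesInt {k n : ℕ} (src tgt : Fin k → Fin n) (w : Fin k → ℤ) : Prop :=
  ∀ v : Fin n,
    ∑ e ∈ Finset.univ.filter (fun e => tgt e = v), w e =
      ∑ e ∈ Finset.univ.filter (fun e => src e = v), w e

lemma ind_eq_sum {k L : ℕ} (c : ZMod (L + 1) → Fin k) (hc : Function.Injective c)
    (e : Fin k) :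
    (Set.range c).indicator (fun _ => (1 : ℤ)) e
      = ∑ i : ZMod (L + 1), if c i = e then 1 else 0 := by
  by_cases h : e ∈ Set.range c
  · obtain ⟨i0, rfl⟩ := h
    rw [Set.indicator_of_mem (Set.mem_range_self i0)]
    rw [Finset.sum_eq_single i0]
    · simp
    · intro b _ hb
      simp only [ite_eq_right_iff]
      intro h'; exact absurd (hc h') hb
    · simp
  · rw [Set.indicator_of_notMem h]
    symm; apply Finset.sum_eq_zero
    intro i _
    have : c i ≠ e := fun he => h ⟨i, he⟩
    simp [this]

lemma succ_val {L : ℕ} (z : ZMod (L + 1)) : (z + 1).val = (z.val + 1) % (L + 1) := by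
  have h : z.val % (L + 1) = z.val := Nat.mod_eq_of_lt (ZMod.val_lt z)
  calc (z + 1).val = (z.val + (1 : ZMod (L + 1)).val) % (L + 1) := ZMod.val_add _ _
    _ = (z.val % (L + 1) + 1 % (L + 1)) % (L + 1) := by rw [h, ZMod.val_one_eq_one_mod]
    _ = (z.val + 1) % (L + 1) := (Nat.add_mod _ _ _).symm

lemma step_lemma {k n : ℕ} (src tgt : Fin k → Fin n) (w : Fin k → ℤ)
    (hnn : ∀ e, 0 ≤ w e) (hcons : conservesInt src tgt w)
    (e : Fin k) (he : 0 < w e) : ∃ e', 0 < w e' ∧ src e' = tgt e := by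
  by_contra hcon
  push_neg at hcon
  have h1 : ∑ f ∈ univ.filter (fun f => src f = tgt e), w f ≤ 0 := by
    apply Finset.sum_nonpos
    intro f hf
    rcases mem_filter.mp hf with ⟨_, hf2⟩
    by_contra hpos
    push_neg at hpos
    exact absurd hf2 (hcon f (lt_of_le_of_ne (hnn f) (by omega)))
  have h2 : 0 < ∑ f ∈ univ.filter (fun f => tgt f = tgt e), w f := by
    apply Finset.sum_pos' (fun f _ => hnn f)
    exact ⟨e, by simp, he⟩
  have := hcons (tgt e)
  omega

lemma exists_cycle {k n : ℕ} (src tgt : Fin k → Fin n) (w : Fin k → ℤ)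
    (hstep : ∀ e : Fin k, 0 < w e → ∃ e', 0 < w e' ∧ src e' = tgt e)
    (e0 : Fin k) (he0 : 0 < w e0) :
    ∃ (L : ℕ) (c : ZMod (L + 1) → Fin k), Function.Injective c ∧
      (∀ i, tgt (c i) = src (c (i + 1))) ∧ (∀ i, 0 < w (c i)) := by
  classical
  -- build an infinite walk of positive-weight edges
  set g : {e : Fin k // 0 < w e} → {e : Fin k // 0 < w e} :=
    fun x => ⟨(hstep x.1 x.2).choose, (hstep x.1 x.2).choose_spec.1⟩ with hg_def
  have hg : ∀ x, src (g x).1 = tgt x.1 := fun x => (hstep x.1 x.2).choose_spec.2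
  set F : ℕ → {e : Fin k // 0 < w e} := fun i => g^[i] ⟨e0, he0⟩ with hF_def
  set f : ℕ → Fin k := fun i => (F i).1 with hf_def
  have hpos : ∀ i, 0 < w (f i) := fun i => (F i).2
  have hpath : ∀ i, tgt (f i) = src (f (i + 1)) := by
    intro i
    have h1 : F (i + 1) = g (F i) := Function.iterate_succ_apply' g i _
    show tgt (F i).1 = src (F (i + 1)).1
    rw [h1]
    exact (hg (F i)).symm
  -- pigeonhole: a repeat among f 0, ..., f k
  have hrep : ∃ j, ∃ i, i < j ∧ f i = f j := by
    have hcard : Fintype.card (Fin k) < Fintype.card (Fin (k + 1)) := by simp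
    obtain ⟨a, b, hne, heq⟩ :=
      Fintype.exists_ne_map_eq_of_card_lt (fun i : Fin (k + 1) => f i.val) hcard
    rcases lt_or_gt_of_ne (fun h : a.val = b.val => hne (Fin.ext h)) with h | h
    · exact ⟨b.val, a.val, h, heq⟩
    · exact ⟨a.val, b.val, h, heq.symm⟩
  set j := Nat.find hrep with hj_def
  obtain ⟨i, hij, hfij⟩ := Nat.find_spec hrep
  have inj_below : ∀ a b, a < b → b < j → f a ≠ f b := by
    intro a b h1 h2 h
    exact Nat.find_min hrep h2 ⟨a, h1, h⟩
  set L := j - i - 1 with hL_def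
  have hLj : i + (L + 1) = j := by omega
  refine ⟨L, fun z => f (i + z.val), ?_, ?_, fun z => hpos _⟩
  · intro z1 z2 h
    have h1 : z1.val < L + 1 := ZMod.val_lt z1
    have h2 : z2.val < L + 1 := ZMod.val_lt z2
    have : z1.val = z2.val := by
      rcases lt_trichotomy z1.val z2.val with hlt | heq | hgt
      · exact absurd h (inj_below _ _ (by omega) (by omega))
      · exact heq
      · exact absurd h.symm (inj_below _ _ (by omega) (by omega))
    exact ZMod.val_injective _ this
  · intro z
    have h1 : z.val < L + 1 := ZMod.val_lt z
    have hsv : (z + 1).val = (z.val + 1) % (L + 1) := succ_val z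
    show tgt (f (i + z.val)) = src (f (i + (z + 1).val))
    by_cases hz : z.val = L
    · have hv : (z + 1).val = 0 := by rw [hsv, hz]; simp
      rw [hv, hz]
      have : i + L + 1 = j := by omega
      calc tgt (f (i + L)) = src (f (i + L + 1)) := hpath _
        _ = src (f (i + 0)) := by rw [this, ← hfij]; norm_num
    · have hv : (z + 1).val = z.val + 1 := by rw [hsv]; exact Nat.mod_eq_of_lt (by omega)
      rw [hv, show i + (z.val + 1) = (i + z.val) + 1 by omega]
      exact hpath _

lemma ind_conserves {k n : ℕ} (src tgt : Fin k → Fin n) {L : ℕ}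
    (c : ZMod (L + 1) → Fin k) (hcinj : Function.Injective c)
    (hccyc : ∀ i, tgt (c i) = src (c (i + 1))) (v : Fin n) :
    ∑ e ∈ univ.filter (fun e => tgt e = v),
        (Set.range c).indicator (fun _ => (1 : ℤ)) e =
      ∑ e ∈ univ.filter (fun e => src e = v),
        (Set.range c).indicator (fun _ => (1 : ℤ)) e := by
  simp_rw [ind_eq_sum c hcinj]
  rw [Finset.sum_comm, Finset.sum_comm (s := univ.filter (fun e => src e = v))]
  have htgt : ∀ i : ZMod (L + 1),
      ∑ e ∈ univ.filter (fun e => tgt e = v), (if c i = e then (1 : ℤ) else 0)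
        = if tgt (c i) = v then 1 else 0 := by
    intro i
    rw [Finset.sum_ite_eq]
    simp [Finset.mem_filter]
  have hsrc : ∀ i : ZMod (L + 1),
      ∑ e ∈ univ.filter (fun e => src e = v), (if c i = e then (1 : ℤ) else 0)
        = if src (c i) = v then 1 else 0 := by
    intro i
    rw [Finset.sum_ite_eq]
    simp [Finset.mem_filter]
  simp_rw [htgt, hsrc]
  rw [← Equiv.sum_comp (Equiv.addRight (1 : ZMod (L + 1)))
    (fun i => if src (c i) = v then (1 : ℤ) else 0)]
  apply Finset.sum_congr rfl
  intro i _
  simp [Equiv.coe_addRight, hccyc i]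
  congr

def Decomp {k n : ℕ} (src tgt : Fin k → Fin n) (w : Fin k → ℤ) : Prop :=
  ∃ (N : ℕ) (m : Fin N → ℕ) (len : Fin N → ℕ)
    (c : (a : Fin N) → ZMod (len a + 1) → Fin k),
    (∀ a, 0 < m a) ∧
    (∀ a, Function.Injective (c a)) ∧
    (∀ a i, tgt (c a i) = src (c a (i + 1))) ∧
    (∀ e, w e =
      ∑ a, (m a : ℤ) * (Set.range (c a)).indicator (fun _ => (1 : ℤ)) e)

lemma decomp_zero {k n : ℕ} (src tgt : Fin k → Fin n) (w : Fin k → ℤ)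
    (h : ∀ e, w e = 0) : Decomp src tgt w :=
  ⟨0, Fin.elim0, Fin.elim0, fun a => a.elim0, fun a => a.elim0, fun a => a.elim0,
    fun a => a.elim0, fun e => by simp [h e]⟩

lemma main_ind {k n : ℕ} (src tgt : Fin k → Fin n) :
    ∀ (s : ℕ) (w : Fin k → ℤ), (∀ e, 0 ≤ w e) → conservesInt src tgt w →
      (∑ e, w e).toNat ≤ s → Decomp src tgt w := by
  intro s
  induction s with
  | zero =>
    intro w hnn hcons hs
    apply decomp_zero
    have h0 : ∑ e, w e = 0 := by
      have := Finset.sum_nonneg (fun e (_ : e ∈ univ) => hnn e)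
      omega
    intro e
    have := (Finset.sum_eq_zero_iff_of_nonneg (fun e _ => hnn e)).mp h0 e (mem_univ e)
    exact this
  | succ s ih =>
    intro w hnn hcons hs
    by_cases hz : ∀ e, w e = 0
    · exact decomp_zero src tgt w hz
    · push_neg at hz
      obtain ⟨e0, he0⟩ := hz
      have he0' : 0 < w e0 := lt_of_le_of_ne (hnn e0) (Ne.symm he0)
      obtain ⟨L, c, hcinj, hccyc, hcpos⟩ :=
        exists_cycle src tgt w (step_lemma src tgt w hnn hcons) e0 he0'
      set ind : Fin k → ℤ := (Set.range c).indicator (fun _ => 1) with hind_def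
      set w' : Fin k → ℤ := fun e => w e - ind e with hw'_def
      have hind01 : ∀ e, ind e = 0 ∨ ind e = 1 := by
        intro e
        by_cases h : e ∈ Set.range c
        · right; rw [hind_def]; exact Set.indicator_of_mem h _
        · left; rw [hind_def]; exact Set.indicator_of_notMem h _
      have hindpos : ∀ e, e ∈ Set.range c → 1 ≤ w e := by
        rintro e ⟨i, rfl⟩; exact hcpos i
      have hnn' : ∀ e, 0 ≤ w' e := by
        intro e
        rw [hw'_def]
        by_cases h : e ∈ Set.range c
        · have h1 := hindpos e h
          have h2 : ind e = 1 := Set.indicator_of_mem h _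
          simp only []
          omega
        · have h2 : ind e = 0 := Set.indicator_of_notMem h _
          have := hnn e
          simp only []
          omega
      have hcons' : conservesInt src tgt w' := by
        intro v
        have h1 := hcons v
        have h2 := ind_conserves src tgt c hcinj hccyc v
        simp only [hw'_def, Finset.sum_sub_distrib]
        rw [h1, ← hind_def] at *
        omega
      have hsum' : ∑ e, w' e = ∑ e, w e - ∑ e, ind e := by
        simp [hw'_def, Finset.sum_sub_distrib]
      have hindsum : (1 : ℤ) ≤ ∑ e, ind e := by
        have h1 : ind (c 0) = 1 := Set.indicator_of_mem (Set.mem_range_self 0) _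
        calc (1 : ℤ) = ind (c 0) := h1.symm
          _ ≤ ∑ e, ind e := Finset.single_le_sum
              (fun e _ => by rcases hind01 e with h | h <;> omega) (mem_univ _)
      have hw'nn : 0 ≤ ∑ e, w' e := Finset.sum_nonneg (fun e _ => hnn' e)
      have hlt : (∑ e, w' e).toNat ≤ s := by omega
      obtain ⟨N, m, len', c', hm, hinj, hcyc, hsum⟩ := ih w' hnn' hcons' hlt
      refine ⟨N + 1, Fin.cons 1 m, Fin.cons L len',
        Fin.cons (α := fun a => ZMod ((Fin.cons L len' : Fin (N + 1) → ℕ) a + 1) → Fin k)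
          c c', ?_, ?_, ?_, ?_⟩
      · intro a
        refine Fin.cases ?_ ?_ a
        · simp
        · intro i; simpa using hm i
      · intro a
        refine Fin.cases ?_ ?_ a
        · exact hcinj
        · intro i; exact hinj i
      · intro a
        refine Fin.cases ?_ ?_ a
        · exact hccyc
        · intro i; exact hcyc i
      · intro e
        rw [Fin.sum_univ_succ]
        have h1 : w e = ind e + w' e := by rw [hw'_def]; ring
        rw [h1, hsum e]
        simp [Fin.cons_zero, Fin.cons_succ]
        rfl

/-- Integer flow decomposition: a nonnegative integer circulation on a finite
directed graph is a finite sum of characteristic vectors of directed cycles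
(each traversing an edge at most once), with positive integer
multiplicities. -/
theorem stmt_19 (k n : ℕ) (src tgt : Fin k → Fin n) (w : Fin k → ℤ)
    (hnn : ∀ e, 0 ≤ w e) (hcons : conservesInt src tgt w) :
    ∃ (N : ℕ) (m : Fin N → ℕ) (len : Fin N → ℕ)
      (c : (a : Fin N) → ZMod (len a + 1) → Fin k),
      (∀ a, 0 < m a) ∧
      (∀ a, Function.Injective (c a)) ∧
      (∀ a i, tgt (c a i) = src (c a (i + 1))) ∧
      (∀ e, w e =
        ∑ a, (m a : ℤ) * (Set.range (c a)).indicator (fun _ => (1 : ℤ)) e) := by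
  exact main_ind src tgt (∑ e, w e).toNat w hnn hcons le_rfl
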